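/- Let m be a regular multisegment and Δ a segment occurring in m. Then the three conditions LC(Δ, m), RC(Δ, m) and LC(Δ, m∖Δ) all hold if and only if Δ precedes no other segment of m and the multisegment consisting of Δ together with all segments of m that precede Δ is a ladder. -/

import Mathlib

/-- A segment `[a;b]` is a pair of integers `a ≤ b`. -/
structure Segment where
  a : ℤ
  b : ℤ
  le : a ≤ b

namespace Segment

/-- `Δ ≺ Δ'` : the segment `Δ = [a;b]` precedes `Δ' = [c;d]`,
i.e. `a < c`, `c - 1 ≤ b` and `b < d`. -/
def prec (Δ Δ' : Segment) : Prop :=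
  Δ.a < Δ'.a ∧ Δ'.a - 1 ≤ Δ.b ∧ Δ.b < Δ'.b

/-- `←Δ = [a-1; b-1]`. -/
def shift (Δ : Segment) : Segment :=
  ⟨Δ.a - 1, Δ.b - 1, by have := Δ.le; omega⟩

instance (Δ Δ' : Segment) : Decidable (Δ.prec Δ') := by
  unfold prec; infer_instance

end Segment

/-- A multisegment (given as an indexed family of segments) is regular if the beginnings
of its segments are pairwise distinct and the ends of its segments are pairwise distinct. -/
def Regular {ι : Type*} (Δ : ι → Segment) : Prop :=
  (∀ i j : ι, (Δ i).a = (Δ j).a → i = j) ∧ (∀ i j : ι, (Δ i).b = (Δ j).b → i = j)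

/-- The condition `LC(Δ₀, m)` : there is an injective function
`f : X_{Δ₀,m} → Y_{Δ₀,m}` with `Δ_{f i} ≺ Δ_i` for all `i ∈ X_{Δ₀,m}`,
where `X_{Δ₀,m} = {i | Δ₀ ≺ Δ_i}` and `Y_{Δ₀,m} = {i | ←Δ₀ ≺ Δ_i}`. -/
def LC {ι : Type*} (Δ₀ : Segment) (Δ : ι → Segment) : Prop :=
  ∃ f : ι → ι, Set.InjOn f {i | Δ₀.prec (Δ i)} ∧
    ∀ i : ι, Δ₀.prec (Δ i) → Δ₀.shift.prec (Δ (f i)) ∧ (Δ (f i)).prec (Δ i)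

/-- The condition `RC(Δ₀, m)` : there is an injective function
`f : X̃_{Δ₀,m} → Ỹ_{Δ₀,m}` with `Δ_i ≺ Δ_{f i}` for all `i ∈ X̃_{Δ₀,m}`,
where `X̃_{Δ₀,m} = {i | Δ_i ≺ Δ₀}` and `Ỹ_{Δ₀,m} = {i | ←Δ_i ≺ Δ₀}`. -/
def RC {ι : Type*} (Δ₀ : Segment) (Δ : ι → Segment) : Prop :=
  ∃ f : ι → ι, Set.InjOn f {i | (Δ i).prec Δ₀} ∧
    ∀ i : ι, (Δ i).prec Δ₀ → (Δ (f i)).shift.prec Δ₀ ∧ (Δ i).prec (Δ (f i))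

/-- The sub-multisegment of `Δ` indexed by the finite set `S` is a ladder: its segments can
be enumerated so that both the beginnings and the ends are strictly decreasing. -/
def IsLadder {ι : Type*} (Δ : ι → Segment) (S : Finset ι) : Prop :=
  ∃ e : Fin S.card ≃ {x // x ∈ S}, ∀ k l : Fin S.card, k < l →
    (Δ (e l).val).a < (Δ (e k).val).a ∧ (Δ (e l).val).b < (Δ (e k).val).b

/-- For a regular multisegment `m` and a segment `Δ_{i₀}` occurring in `m`:
`LC(Δ_{i₀}, m)`, `RC(Δ_{i₀}, m)` and `LC(Δ_{i₀}, m∖Δ_{i₀})` all hold iff `Δ_{i₀}` precedes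
no other segment of `m` and `Δ_{i₀}` together with all the segments of `m` preceding it
forms a ladder. -/

lemma isLadder_of_noCross {N : ℕ} (Δ : Fin N → Segment) (S : Finset (Fin N))
    (hb : ∀ i j : Fin N, (Δ i).b = (Δ j).b → i = j)
    (h : ∀ i ∈ S, ∀ j ∈ S, (Δ i).b < (Δ j).b → (Δ i).a < (Δ j).a) :
    IsLadder Δ S := by
  classical
  let r : Fin N → Fin N → Prop := fun i j => (Δ j).b ≤ (Δ i).b
  haveI : DecidableRel r := fun i j => by dsimp only [r]; infer_instance
  haveI : IsTotal (Fin N) r := ⟨fun i j => le_total _ _⟩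
  haveI : IsTrans (Fin N) r := ⟨fun a b c h1 h2 => le_trans h2 h1⟩
  haveI : IsAntisymm (Fin N) r := ⟨fun i j h1 h2 => hb i j (le_antisymm h2 h1)⟩
  set l := S.sort r with hl
  have hlen : l.length = S.card := S.length_sort r
  have hnd : l.Nodup := S.sort_nodup r
  have hsorted : l.Pairwise r := S.pairwise_sort r
  have hmem : ∀ x, x ∈ l ↔ x ∈ S := fun x => Finset.mem_sort r
  let tf : Fin S.card → {x // x ∈ S} :=
    fun k => ⟨l.get (Fin.cast hlen.symm k), (hmem _).1 (l.get_mem _)⟩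
  have hbij : Function.Bijective tf := by
    constructor
    · intro x y hxy
      have := (List.nodup_iff_injective_get.1 hnd) (Subtype.ext_iff.1 hxy)
      exact Fin.ext (by simpa using Fin.ext_iff.1 this)
    · rintro ⟨x, hx⟩
      obtain ⟨k, hk⟩ := List.get_of_mem ((hmem x).2 hx)
      exact ⟨Fin.cast hlen k, Subtype.ext hk⟩
  refine ⟨Equiv.ofBijective tf hbij, ?_⟩
  intro k kk hkk
  have h1 : r (l.get (Fin.cast hlen.symm k)) (l.get (Fin.cast hlen.symm kk)) :=
    hsorted.rel_get_of_lt (by simpa using hkk)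
  have hne : l.get (Fin.cast hlen.symm k) ≠ l.get (Fin.cast hlen.symm kk) := by
    intro hE
    exact absurd (Fin.ext_iff.1 ((List.nodup_iff_injective_get.1 hnd) hE)) (by simp; omega)
  have hbne : (Δ (l.get (Fin.cast hlen.symm kk))).b ≠ (Δ (l.get (Fin.cast hlen.symm k))).b :=
    fun hE => hne (hb _ _ hE.symm)
  have hblt : (Δ (l.get (Fin.cast hlen.symm kk))).b < (Δ (l.get (Fin.cast hlen.symm k))).b :=
    lt_of_le_of_ne h1 hbne
  have hmemS : ∀ j, l.get (Fin.cast hlen.symm j) ∈ S := fun j => (hmem _).1 (l.get_mem _)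
  exact ⟨h _ (hmemS kk) _ (hmemS k) hblt, hblt⟩

set_option maxHeartbeats 1600000 in
theorem statement4 {N : ℕ} (Δ : Fin N → Segment) (hreg : Regular Δ) (i₀ : Fin N) :
    (LC (Δ i₀) Δ ∧ RC (Δ i₀) Δ ∧
        LC (Δ i₀) (fun i : {i : Fin N // i ≠ i₀} => Δ i.val)) ↔
    ((∀ i : Fin N, i ≠ i₀ → ¬ (Δ i₀).prec (Δ i)) ∧
      IsLadder Δ (insert i₀ (Finset.univ.filter fun i => (Δ i).prec (Δ i₀)))) := by
  classical
  obtain ⟨ha, hb⟩ := hreg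
  have hmemS : ∀ i : Fin N,
      (i ∈ insert i₀ (Finset.univ.filter fun i => (Δ i).prec (Δ i₀))) ↔
      (i = i₀ ∨ (Δ i).prec (Δ i₀)) := by
    intro i; simp
  constructor
  · rintro ⟨hLC, hRC, hLC'⟩
    obtain ⟨g, ginj, hg⟩ := hLC'
    -- Part 1: Δ i₀ precedes no segment of m
    have hX : ∀ n : ℕ, ∀ i : Fin N, ((Δ i).b - (Δ i₀).b).toNat ≤ n → ¬ (Δ i₀).prec (Δ i) := by
      intro n
      induction n with
      | zero =>
        intro i hle hp
        obtain ⟨p1, p2, p3⟩ := hp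
        omega
      | succ n ih =>
        intro i hle hp
        have hne : i ≠ i₀ := by
          rintro rfl; exact absurd hp.1 (lt_irrefl _)
        obtain ⟨hs, hpp⟩ := hg ⟨i, hne⟩ hp
        simp only [Segment.prec, Segment.shift] at hs hpp
        obtain ⟨s1, s2, s3⟩ := hs
        obtain ⟨p1, p2, p3⟩ := hpp
        have hjne : (g ⟨i, hne⟩).val ≠ i₀ := (g ⟨i, hne⟩).2
        have hja : (Δ (g ⟨i, hne⟩).val).a ≠ (Δ i₀).a := fun hE => hjne (ha _ i₀ hE)
        have hjb : (Δ (g ⟨i, hne⟩).val).b ≠ (Δ i₀).b := fun hE => hjne (hb _ i₀ hE)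
        have hprec : (Δ i₀).prec (Δ (g ⟨i, hne⟩).val) := ⟨by omega, by omega, by omega⟩
        exact ih _ (by omega) hprec
    have part1 : ∀ i : Fin N, i ≠ i₀ → ¬ (Δ i₀).prec (Δ i) := fun i _ => hX _ i le_rfl
    refine ⟨part1, ?_⟩
    -- Part 2: ladder
    obtain ⟨f, finj, hf⟩ := hRC
    have hstep : ∀ i : Fin N, (Δ i).prec (Δ i₀) →
        ((f i = i₀ ∨ (Δ (f i)).prec (Δ i₀)) ∧ (Δ i).b < (Δ (f i)).b ∧ (Δ i).a < (Δ (f i)).a) := by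
      intro i hi
      obtain ⟨hs, hp⟩ := hf i hi
      obtain ⟨s1, s2, s3⟩ := hs
      obtain ⟨p1, p2, p3⟩ := hp
      simp only [Segment.shift] at s1 s2 s3
      refine ⟨?_, p3, p1⟩
      by_cases hfe : f i = i₀
      · exact Or.inl hfe
      · have h1 : (Δ (f i)).a ≠ (Δ i₀).a := fun hE => hfe (ha _ _ hE)
        have h2 : (Δ (f i)).b ≠ (Δ i₀).b := fun hE => hfe (hb _ _ hE)
        exact Or.inr ⟨by omega, by omega, by omega⟩
    have hstepS : ∀ i : Fin N, (Δ i).prec (Δ i₀) →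
        f i ∈ insert i₀ (Finset.univ.filter fun i => (Δ i).prec (Δ i₀)) := by
      intro i hi
      exact (hmemS _).2 (hstep i hi).1
    set S := insert i₀ (Finset.univ.filter fun i => (Δ i).prec (Δ i₀)) with hSdef
    -- the successor lemma
    have hsucc : ∀ i : Fin N, (Δ i).prec (Δ i₀) →
        ∀ j ∈ S, (Δ i).b < (Δ j).b → (Δ (f i)).b ≤ (Δ j).b := by
      intro i hi j hjS hbij
      set A := S.filter (fun j => (Δ i).b < (Δ j).b) with hA
      have hfiA : f i ∈ A := by
        refine Finset.mem_filter.2 ⟨hstepS i hi, (hstep i hi).2.1⟩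
      have hi0A : i₀ ∈ A := by
        refine Finset.mem_filter.2 ⟨(hmemS _).2 (Or.inl rfl), hi.2.2⟩
      obtain ⟨mm, hmA, hmmin⟩ := A.exists_min_image (fun j => (Δ j).b) ⟨i₀, hi0A⟩
      have hjA : j ∈ A := Finset.mem_filter.2 ⟨hjS, hbij⟩
      -- show f i = mm
      have hfim : f i = mm := by
        by_contra hfm
        -- counting argument
        have hsub : insert (f i) ((A.erase i₀).image f) ⊆ A := by
          intro x hx
          rcases Finset.mem_insert.1 hx with rfl | hx
          · exact hfiA
          · obtain ⟨j', hj', rfl⟩ := Finset.mem_image.1 hx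
            have hj'ne : j' ≠ i₀ := (Finset.mem_erase.1 hj').1
            have hj'A := (Finset.mem_erase.1 hj').2
            obtain ⟨hj'S, hj'b⟩ := Finset.mem_filter.1 hj'A
            have hj'prec : (Δ j').prec (Δ i₀) := by
              rcases (hmemS j').1 hj'S with rfl | hh
              · exact absurd rfl hj'ne
              · exact hh
            refine Finset.mem_filter.2 ⟨hstepS j' hj'prec, ?_⟩
            have := (hstep j' hj'prec).2.1
            omega
        have hnotin : f i ∉ (A.erase i₀).image f := by
          intro hE
          obtain ⟨j', hj', heq⟩ := Finset.mem_image.1 hE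
          have hj'ne : j' ≠ i₀ := (Finset.mem_erase.1 hj').1
          have hj'A := (Finset.mem_erase.1 hj').2
          obtain ⟨hj'S, hj'b⟩ := Finset.mem_filter.1 hj'A
          have hj'prec : (Δ j').prec (Δ i₀) := by
            rcases (hmemS j').1 hj'S with rfl | hh
            · exact absurd rfl hj'ne
            · exact hh
          have hji : j' = i := finj hj'prec hi heq
          rw [hji] at hj'b
          exact lt_irrefl _ hj'b
        have hinjA : Set.InjOn f (A.erase i₀ : Finset (Fin N)) := by
          intro x hx y hy hxy
          have hxp : (Δ x).prec (Δ i₀) := by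
            have hxe := Finset.mem_erase.1 (Finset.mem_coe.1 hx)
            rcases (hmemS x).1 (Finset.mem_filter.1 hxe.2).1 with rfl | hh
            · exact absurd rfl hxe.1
            · exact hh
          have hyp : (Δ y).prec (Δ i₀) := by
            have hye := Finset.mem_erase.1 (Finset.mem_coe.1 hy)
            rcases (hmemS y).1 (Finset.mem_filter.1 hye.2).1 with rfl | hh
            · exact absurd rfl hye.1
            · exact hh
          exact finj hxp hyp hxy
        have hcard : (insert (f i) ((A.erase i₀).image f)).card = A.card := by
          rw [Finset.card_insert_of_notMem hnotin, Finset.card_image_of_injOn hinjA,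
            Finset.card_erase_of_mem hi0A]
          have : 0 < A.card := Finset.card_pos.2 ⟨i₀, hi0A⟩
          omega
        have heqA : insert (f i) ((A.erase i₀).image f) = A :=
          Finset.eq_of_subset_of_card_le hsub (le_of_eq hcard.symm)
        have hmC : mm ∈ insert (f i) ((A.erase i₀).image f) := by rw [heqA]; exact hmA
        rcases Finset.mem_insert.1 hmC with hE | hE
        · exact hfm hE.symm
        · obtain ⟨j', hj', heq⟩ := Finset.mem_image.1 hE
          have hj'A := (Finset.mem_erase.1 hj').2
          obtain ⟨hj'S, hj'b⟩ := Finset.mem_filter.1 hj'A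
          have hj'prec : (Δ j').prec (Δ i₀) := by
            rcases (hmemS j').1 hj'S with rfl | hh
            · exact absurd rfl (Finset.mem_erase.1 hj').1
            · exact hh
          have h1 := (hstep j' hj'prec).2.1
          have h2 := hmmin j' hj'A
          rw [heq] at h1
          omega
      rw [hfim]
      exact hmmin j hjA
    -- no-crossing from the successor lemma
    have hnc : ∀ n : ℕ, ∀ i ∈ S, ∀ j ∈ S, (Δ i).b < (Δ j).b →
        ((Δ j).b - (Δ i).b).toNat ≤ n → (Δ i).a < (Δ j).a := by
      intro n
      induction n with
      | zero => intro i _ j _ hbij hle; omega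
      | succ n ih =>
        intro i hiS j hjS hbij hle
        have hiX : (Δ i).prec (Δ i₀) := by
          rcases (hmemS i).1 hiS with rfl | hh
          · exfalso
            rcases (hmemS j).1 hjS with rfl | hh
            · omega
            · have := hh.2.2; omega
          · exact hh
        obtain ⟨_, hbf, haf⟩ := hstep i hiX
        have hle2 := hsucc i hiX j hjS hbij
        rcases eq_or_lt_of_le hle2 with heq | hlt
        · have : f i = j := hb _ _ heq
          rw [this] at haf
          exact haf
        · have hfS : f i ∈ S := hstepS i hiX
          have := ih (f i) hfS j hjS hlt (by omega)
          omega
    refine isLadder_of_noCross Δ S hb ?_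
    intro i hiS j hjS hbij
    exact hnc ((Δ j).b - (Δ i).b).toNat i hiS j hjS hbij le_rfl
  · rintro ⟨h1, h2⟩
    have hX : ∀ i : Fin N, ¬ (Δ i₀).prec (Δ i) := by
      intro i hp
      by_cases hE : i = i₀
      · subst hE; exact absurd hp.1 (lt_irrefl _)
      · exact h1 i hE hp
    set S := insert i₀ (Finset.univ.filter fun i => (Δ i).prec (Δ i₀)) with hSdef
    obtain ⟨e, he⟩ := h2
    -- correlation from ladder: a-increasing implies b-increasing
    have hmono : ∀ i ∈ S, ∀ j ∈ S, (Δ i).a < (Δ j).a → (Δ i).b < (Δ j).b := by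
      intro i hiS j hjS hab
      obtain ⟨k, hk⟩ : ∃ k, (e k).val = i := ⟨e.symm ⟨i, hiS⟩, by simp⟩
      obtain ⟨kk, hkk⟩ : ∃ kk, (e kk).val = j := ⟨e.symm ⟨j, hjS⟩, by simp⟩
      rcases lt_trichotomy k kk with hh | hh | hh
      · have := he k kk hh
        rw [hk, hkk] at this
        omega
      · exfalso; rw [hh, hkk] at hk; rw [hk] at hab; omega
      · have := he kk k hh
        rw [hk, hkk] at this
        omega
    refine ⟨⟨id, fun x hx => (hX x hx).elim, fun i hi => (hX i hi).elim⟩, ?_,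
      ⟨id, fun x hx => (hX x.val hx).elim, fun i hi => (hX i.val hi).elim⟩⟩
    -- RC
    have hex : ∀ i : Fin N, (Δ i).prec (Δ i₀) → ∃ j : Fin N, j ∈ S ∧ (Δ i).a < (Δ j).a ∧
        ∀ j' ∈ S, (Δ i).a < (Δ j').a → (Δ j).a ≤ (Δ j').a := by
      intro i hi
      have h0 : i₀ ∈ S.filter (fun j => (Δ i).a < (Δ j).a) := by
        refine Finset.mem_filter.2 ⟨Finset.mem_insert_self _ _, hi.1⟩
      obtain ⟨mm, hm, hmin⟩ := Finset.exists_min_image _ (fun j => (Δ j).a)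
        ⟨i₀, h0⟩
      obtain ⟨hmS, hma⟩ := Finset.mem_filter.1 hm
      exact ⟨mm, hmS, hma, fun j' hj' hj'a => hmin j' (Finset.mem_filter.2 ⟨hj', hj'a⟩)⟩
    refine ⟨fun i => if h : (Δ i).prec (Δ i₀) then (hex i h).choose else i, ?_, ?_⟩
    · intro x hx y hy hxy
      simp only [Set.mem_setOf_eq] at hx hy
      beta_reduce at hxy
      rw [dif_pos hx, dif_pos hy] at hxy
      obtain ⟨hxS, hxa, hxmin⟩ := (hex x hx).choose_spec
      obtain ⟨hyS, hya, hymin⟩ := (hex y hy).choose_spec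
      by_contra hne
      have haneq : (Δ x).a ≠ (Δ y).a := fun hE => hne (ha x y hE)
      have hxSmem : x ∈ S := Finset.mem_insert.2 (Or.inr (by simp [hx]))
      have hySmem : y ∈ S := Finset.mem_insert.2 (Or.inr (by simp [hy]))
      rcases lt_or_gt_of_ne haneq with hlt | hlt
      · have h1 := hxmin y hySmem hlt
        rw [hxy] at h1
        omega
      · have h1 := hymin x hxSmem hlt
        rw [← hxy] at h1
        omega
    · intro i hi
      beta_reduce
      rw [dif_pos hi]
      obtain ⟨hjS, hja, hjmin⟩ := (hex i hi).choose_spec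
      have hiS : i ∈ S := Finset.mem_insert.2 (Or.inr (by simp [hi]))
      have hbij : (Δ i).b < (Δ ((hex i hi).choose)).b := hmono i hiS _ hjS hja
      have p1 := hi.1
      have p2 := hi.2.1
      have p3 := hi.2.2
      have hle0 := (Δ i₀).le
      have hjcase : (hex i hi).choose = i₀ ∨ (Δ ((hex i hi).choose)).prec (Δ i₀) := by
        rcases Finset.mem_insert.1 hjS with hE | hjf
        · exact Or.inl hE
        · exact Or.inr (Finset.mem_filter.1 hjf).2
      rcases hjcase with hE | hjprec
      · rw [hE] at hja hbij ⊢
        exact ⟨⟨by simp only [Segment.shift]; omega,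
          by simp only [Segment.shift]; omega,
          by simp only [Segment.shift]; omega⟩, ⟨hja, by omega, hbij⟩⟩
      · have q1 := hjprec.1
        have q2 := hjprec.2.1
        have q3 := hjprec.2.2
        exact ⟨⟨by simp only [Segment.shift]; omega,
          by simp only [Segment.shift]; omega,
          by simp only [Segment.shift]; omega⟩, ⟨hja, by omega, hbij⟩⟩
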